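/- Let g be a nonnegative real-valued multiplicative function and x ≥ 2. Define Δ = sup over 1 ≤ y ≤ x of y^{-1} ∑_{q ≤ y} g(q) log q, where q runs over prime powers. Then ∑_{2 ≤ n ≤ x} g(n) ≤ (x/log x + 10x/(log x)^2) · Δ · ∑_{n ≤ x} g(n)/n. -/

import Mathlib

open Finset
open scoped Classical

lemma aux_pow_le_factorial_exp : ∀ n : ℕ, (n:ℝ)^n ≤ (Nat.factorial n : ℝ) * Real.exp n := by
  intro n
  induction n with
  | zero => simp
  | succ n ih =>
    have hstep : ((n+1:ℕ):ℝ)^n ≤ (Nat.factorial n : ℝ) * Real.exp ((n:ℝ)+1) := by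
      rcases Nat.eq_zero_or_pos n with h0 | hpos
      · subst h0; simp [Real.one_le_exp]
      · have hn : (0:ℝ) < n := by exact_mod_cast hpos
        have h1 : ((n+1:ℕ):ℝ) = (n:ℝ) * (1 + 1/(n:ℝ)) := by
          push_cast; field_simp
        have h2 : (1 + 1/(n:ℝ))^n ≤ Real.exp 1 := by
          have h3 := Real.add_one_le_exp (1/(n:ℝ))
          calc (1 + 1/(n:ℝ))^n ≤ (Real.exp (1/(n:ℝ)))^n := by
                apply pow_le_pow_left₀ (by positivity) (by linarith)
            _ = Real.exp 1 := by
                rw [← Real.exp_nat_mul]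
                congr 1
                field_simp
        calc ((n+1:ℕ):ℝ)^n = (n:ℝ)^n * (1 + 1/(n:ℝ))^n := by
              rw [h1, mul_pow]
          _ ≤ ((Nat.factorial n : ℝ) * Real.exp n) * Real.exp 1 := by
              apply mul_le_mul ih h2 (by positivity) (by positivity)
          _ = (Nat.factorial n : ℝ) * Real.exp ((n:ℝ)+1) := by
              rw [mul_assoc, ← Real.exp_add]
    calc ((n+1:ℕ):ℝ)^(n+1) = ((n+1:ℕ):ℝ) * ((n+1:ℕ):ℝ)^n := by ring
      _ ≤ ((n+1:ℕ):ℝ) * ((Nat.factorial n : ℝ) * Real.exp ((n:ℝ)+1)) := by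
          apply mul_le_mul_of_nonneg_left hstep (by positivity)
      _ = (Nat.factorial (n+1) : ℝ) * Real.exp ((n+1:ℕ):ℝ) := by
          rw [Nat.factorial_succ]; push_cast; ring

lemma aux_log_factorial {N : ℕ} (hN : 1 ≤ N) :
    (N:ℝ) * Real.log N - N ≤ Real.log (Nat.factorial N) := by
  have h := aux_pow_le_factorial_exp N
  have hNpos : (0:ℝ) < N := by exact_mod_cast hN
  have hfpos : (0:ℝ) < (Nat.factorial N : ℝ) := by exact_mod_cast N.factorial_pos
  have h2 := Real.log_le_log (by positivity) h
  rw [Real.log_pow, Real.log_mul (ne_of_gt hfpos) (Real.exp_ne_zero _), Real.log_exp] at h2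
  push_cast at h2 ⊢
  linarith

lemma aux_sum_log_le {N : ℕ} (hN : 1 ≤ N) {x : ℝ} (hxN : (N:ℝ) ≤ x) :
    ∑ n ∈ Icc 2 N, Real.log (x / n) ≤ x := by
  have hx0 : (0:ℝ) < x := lt_of_lt_of_le (by exact_mod_cast hN) hxN
  have h1 : ∑ n ∈ Icc 2 N, Real.log (x / n) ≤ ∑ n ∈ Icc 1 N, Real.log (x / n) := by
    apply sum_le_sum_of_subset_of_nonneg
    · intro n hn; simp only [mem_Icc] at *; omega
    · intro n hn _
      simp only [mem_Icc] at hn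
      apply Real.log_nonneg
      rw [le_div_iff₀ (by exact_mod_cast hn.1)]
      have : (n:ℝ) ≤ N := by exact_mod_cast hn.2
      linarith
  have h2 : ∑ n ∈ Icc 1 N, Real.log (x / n) = (N:ℝ) * Real.log x - Real.log (Nat.factorial N) := by
    have hlogs : ∑ n ∈ Icc 1 N, Real.log (n:ℝ) = Real.log (Nat.factorial N) := by
      rw [← Finset.prod_Ico_id_eq_factorial, Finset.Ico_add_one_right_eq_Icc]
      rw [← Real.log_prod]
      · congr 1; push_cast; rfl
      · intro n hn
        simp only [mem_Icc] at hn
        have : 0 < n := hn.1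
        positivity
    calc ∑ n ∈ Icc 1 N, Real.log (x / n)
        = ∑ n ∈ Icc 1 N, (Real.log x - Real.log n) := by
          apply sum_congr rfl
          intro n hn
          simp only [mem_Icc] at hn
          have hn0 : (0:ℝ) < n := by exact_mod_cast hn.1
          rw [Real.log_div (ne_of_gt hx0) (ne_of_gt hn0)]
      _ = (N:ℝ) * Real.log x - Real.log (Nat.factorial N) := by
          rw [Finset.sum_sub_distrib, hlogs, Finset.sum_const, Nat.card_Icc]
          simp [nsmul_eq_mul]
  have h3 := aux_log_factorial hN
  have hNpos : (0:ℝ) < N := by exact_mod_cast hN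
  have h4 : Real.log x - Real.log N = Real.log (x / N) := (Real.log_div (ne_of_gt hx0) (ne_of_gt hNpos)).symm
  have h5 : Real.log (x / N) ≤ x / N - 1 := Real.log_le_sub_one_of_pos (by positivity)
  have h6 : (N:ℝ) * (Real.log x - Real.log N) ≤ (N:ℝ) * (x/N - 1) := by
    rw [h4]
    exact mul_le_mul_of_nonneg_left h5 (le_of_lt hNpos)
  have hxx : (N:ℝ) * (x/N - 1) = x - N := by field_simp
  nlinarith

lemma aux_abel (a w : ℕ → ℝ) (C : ℝ) (N : ℕ) (hN : 2 ≤ N)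
    (ha : ∀ n, 0 ≤ a n)
    (hw0 : ∀ n, 2 ≤ n → n ≤ N → 0 ≤ w n)
    (hwm : ∀ n, 2 ≤ n → n + 1 ≤ N → w (n+1) ≤ w n)
    (hA : ∀ k, 2 ≤ k → k ≤ N → ∑ n ∈ Icc 2 k, a n ≤ C * k) :
    ∑ n ∈ Icc 2 N, a n * w n ≤ C * (2 * w 2 + ∑ n ∈ Icc 3 N, w n) := by
  have key : ∀ k, 2 ≤ k → k ≤ N →
      ∑ n ∈ Icc 2 k, a n * w n ≤
        C * (2 * w 2 + ∑ n ∈ Icc 3 k, w n) - (C * k - ∑ n ∈ Icc 2 k, a n) * w k := by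
    intro k hk
    induction k, hk using Nat.le_induction with
    | base =>
      intro _
      simp only [Finset.Icc_self, Finset.sum_singleton]
      have : Icc 3 2 = (∅ : Finset ℕ) := by decide
      rw [this, Finset.sum_empty]
      apply le_of_eq; push_cast; ring
    | succ k hk ih =>
      intro hkN
      have hkN' : k ≤ N := by omega
      have ih' := ih hkN'
      have h1 : ∑ n ∈ Icc 2 (k+1), a n * w n = (∑ n ∈ Icc 2 k, a n * w n) + a (k+1) * w (k+1) :=
        Finset.sum_Icc_succ_top (by omega) _
      have h2 : ∑ n ∈ Icc 2 (k+1), a n = (∑ n ∈ Icc 2 k, a n) + a (k+1) :=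
        Finset.sum_Icc_succ_top (by omega) _
      have h3 : ∑ n ∈ Icc 3 (k+1), w n = (∑ n ∈ Icc 3 k, w n) + w (k+1) :=
        Finset.sum_Icc_succ_top (by omega) _
      have hAk : ∑ n ∈ Icc 2 k, a n ≤ C * k := hA k hk hkN'
      have hwmk : w (k+1) ≤ w k := hwm k hk hkN
      have hw1 : 0 ≤ w (k+1) := hw0 (k+1) (by omega) hkN
      have hmono : (C * k - ∑ n ∈ Icc 2 k, a n) * w (k+1) ≤
          (C * k - ∑ n ∈ Icc 2 k, a n) * w k :=
        mul_le_mul_of_nonneg_left hwmk (by linarith)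
      rw [h1, h2, h3]
      push_cast
      nlinarith [ih']
  have hfin := key N (by omega) le_rfl
  have hAN : ∑ n ∈ Icc 2 N, a n ≤ C * N := hA N (by omega) le_rfl
  have hwN : 0 ≤ w N := hw0 N (by omega) le_rfl
  nlinarith

lemma aux_K (g : ℕ → ℝ) (hg0 : ∀ n, 0 ≤ g n)
    (hgm : ∀ m n : ℕ, Nat.Coprime m n → g (m * n) = g m * g n)
    (x : ℝ) (hx : 2 ≤ x) (Δ : ℝ)
    (hΔ : ∀ y : ℝ, 1 ≤ y → y ≤ x →
      ∑ q ∈ (Finset.range (⌊y⌋₊ + 1)).filter (fun q => IsPrimePow q),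
        g q * Real.log q ≤ Δ * y)
    (M : ℕ) (hM : M ≤ ⌊x⌋₊) :
    ∑ n ∈ Icc 2 M, g n * Real.log n ≤
      Δ * M * ∑ m ∈ Icc 1 ⌊x⌋₊, g m / m := by
  have hx0 : (0:ℝ) < x := by linarith
  have hMx : (M:ℝ) ≤ x := le_trans (by exact_mod_cast hM) (Nat.floor_le (le_of_lt hx0))
  -- Step 1: pointwise decomposition
  have step1 : ∀ n ∈ Icc 2 M, g n * Real.log n =
      ∑ p ∈ n.primeFactors,
        g (p ^ n.factorization p) * Real.log ((p ^ n.factorization p : ℕ) : ℝ) *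
          g (n / p ^ n.factorization p) := by
    intro n hn
    simp only [mem_Icc] at hn
    have hn0 : n ≠ 0 := by omega
    have hprod : ∏ p ∈ n.primeFactors, p ^ n.factorization p = n := by
      rw [← Nat.prod_factorization_eq_prod_primeFactors]
      exact Nat.factorization_prod_pow_eq_self hn0
    have hlog : Real.log n = ∑ p ∈ n.primeFactors, Real.log ((p ^ n.factorization p : ℕ) : ℝ) := by
      conv_lhs => rw [← hprod]
      rw [Nat.cast_prod, Real.log_prod]
      intro p hp
      have hp' : p.Prime := Nat.prime_of_mem_primeFactors hp
      exact_mod_cast pow_ne_zero _ (Nat.cast_ne_zero.mpr hp'.pos.ne' : ((p:ℝ) ≠ 0))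
    rw [hlog, Finset.mul_sum]
    apply sum_congr rfl
    intro p hp
    have hp' : p.Prime := Nat.prime_of_mem_primeFactors hp
    have hco : Nat.Coprime (p ^ n.factorization p) (n / p ^ n.factorization p) :=
      Nat.Coprime.pow_left _ (Nat.coprime_ordCompl hp' hn0)
    have hsplit : g n = g (p ^ n.factorization p) * g (n / p ^ n.factorization p) := by
      conv_lhs => rw [← Nat.ordProj_mul_ordCompl_eq_self n p]
      exact hgm _ _ hco
    rw [hsplit]; push_cast; ring
  rw [Finset.sum_congr rfl step1]
  rw [Finset.sum_sigma']
  -- the injection into pairs (m, q)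
  set σ : Finset ((_ : ℕ) × ℕ) := (Icc 2 M).sigma (fun n => n.primeFactors) with hσ
  set B : Finset ((_ : ℕ) × ℕ) :=
    (Icc 1 M).sigma (fun m => (Finset.range (M / m + 1)).filter (fun q => IsPrimePow q)) with hB
  set φ : ((_ : ℕ) × ℕ) → ((_ : ℕ) × ℕ) :=
    fun z => ⟨z.1 / z.2 ^ z.1.factorization z.2, z.2 ^ z.1.factorization z.2⟩ with hφ
  set G : ((_ : ℕ) × ℕ) → ℝ := fun z => g z.2 * Real.log z.2 * g z.1 with hG
  have hmem : ∀ z ∈ σ, (2 ≤ z.1 ∧ z.1 ≤ M) ∧ z.2.Prime ∧ z.2 ∣ z.1 ∧ 0 < z.1.factorization z.2 := by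
    intro z hz
    rw [hσ, Finset.mem_sigma, mem_Icc] at hz
    obtain ⟨⟨h1, h2⟩, h3⟩ := hz
    have hp : z.2.Prime := Nat.prime_of_mem_primeFactors h3
    have hd : z.2 ∣ z.1 := Nat.dvd_of_mem_primeFactors h3
    exact ⟨⟨h1, h2⟩, hp, hd, hp.factorization_pos_of_dvd (by omega) hd⟩
  have hinj : ∀ z ∈ σ, ∀ y ∈ σ, φ z = φ y → z = y := by
    intro z hz y hy hzy
    obtain ⟨⟨hz1, hz2⟩, hzp, hzd, hzv⟩ := hmem z hz
    obtain ⟨⟨hy1, hy2⟩, hyp, hyd, hyv⟩ := hmem y hy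
    have h1 : (φ z).1 = (φ y).1 := by rw [hzy]
    have h2 : (φ z).2 = (φ y).2 := by rw [hzy]
    simp only [hφ] at h1 h2
    have hn : z.1 = y.1 := by
      conv_lhs => rw [← Nat.ordProj_mul_ordCompl_eq_self z.1 z.2]
      conv_rhs => rw [← Nat.ordProj_mul_ordCompl_eq_self y.1 y.2]
      rw [h1, h2]
    have hpq : z.2 = y.2 := by
      have hdvd : z.2 ∣ y.2 ^ y.1.factorization y.2 := by
        rw [← h2]
        exact dvd_pow_self z.2 hzv.ne'
      have := hzp.dvd_of_dvd_pow hdvd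
      exact (Nat.prime_dvd_prime_iff_eq hzp hyp).mp this
    obtain ⟨z1, z2⟩ := z
    obtain ⟨y1, y2⟩ := y
    simp only at hn hpq
    subst hn; subst hpq; rfl
  have himage : σ.image φ ⊆ B := by
    intro y hy
    rw [Finset.mem_image] at hy
    obtain ⟨z, hz, rfl⟩ := hy
    obtain ⟨⟨hz1, hz2⟩, hzp, hzd, hzv⟩ := hmem z hz
    have hn0 : z.1 ≠ 0 := by omega
    rw [hB, Finset.mem_sigma, mem_Icc, Finset.mem_filter, Finset.mem_range]
    simp only [hφ]
    have hm1 : 1 ≤ z.1 / z.2 ^ z.1.factorization z.2 := Nat.ordCompl_pos z.2 hn0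
    have hmM : z.1 / z.2 ^ z.1.factorization z.2 ≤ M := le_trans (Nat.ordCompl_le z.1 z.2) hz2
    refine ⟨⟨hm1, hmM⟩, ?_, ⟨z.2, z.1.factorization z.2, hzp.prime, hzv, rfl⟩⟩
    have hmul : z.2 ^ z.1.factorization z.2 * (z.1 / z.2 ^ z.1.factorization z.2) ≤ M := by
      rw [Nat.ordProj_mul_ordCompl_eq_self]; exact hz2
    have := (Nat.le_div_iff_mul_le hm1).mpr hmul
    omega
  have hGnonneg : ∀ y ∈ B, 0 ≤ G y := by
    intro y hy
    rw [hB, Finset.mem_sigma, Finset.mem_filter] at hy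
    have h2 : 2 ≤ y.2 := hy.2.2.two_le
    have : (0:ℝ) ≤ Real.log y.2 := Real.log_nonneg (by exact_mod_cast le_trans one_le_two h2)
    exact mul_nonneg (mul_nonneg (hg0 _) this) (hg0 _)
  have hchain : ∑ z ∈ σ, G (φ z) ≤ ∑ y ∈ B, G y := by
    rw [← Finset.sum_image hinj]
    exact Finset.sum_le_sum_of_subset_of_nonneg himage (fun y hyB _ => hGnonneg y hyB)
  have hB2 : ∑ y ∈ B, G y =
      ∑ m ∈ Icc 1 M, ∑ q ∈ (Finset.range (M / m + 1)).filter (fun q => IsPrimePow q),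
        g q * Real.log q * g m := by
    rw [hB, Finset.sum_sigma]
  have hinner : ∀ m ∈ Icc 1 M,
      ∑ q ∈ (Finset.range (M / m + 1)).filter (fun q => IsPrimePow q),
        g q * Real.log q * g m ≤ (Δ * ((M:ℝ) / m)) * g m := by
    intro m hm
    rw [mem_Icc] at hm
    have hm0 : (0:ℝ) < m := by exact_mod_cast hm.1
    have hy1 : (1:ℝ) ≤ (M:ℝ) / m := by
      rw [le_div_iff₀ hm0]
      simp only [one_mul]
      exact_mod_cast hm.2
    have hy2 : (M:ℝ) / m ≤ x := by
      apply le_trans (div_le_self (by positivity) (by exact_mod_cast hm.1))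
      exact hMx
    have hfloor : ⌊(M:ℝ) / (m:ℝ)⌋₊ = M / m := by
      rw [show ((m:ℝ)) = ((m:ℕ):ℝ) from rfl, Nat.floor_div_natCast, Nat.floor_natCast]
    have hΔ' := hΔ ((M:ℝ)/m) hy1 hy2
    rw [hfloor] at hΔ'
    rw [← Finset.sum_mul]
    exact mul_le_mul_of_nonneg_right hΔ' (hg0 m)
  have hfinal : ∑ m ∈ Icc 1 M, (Δ * ((M:ℝ) / m)) * g m =
      Δ * M * ∑ m ∈ Icc 1 M, g m / m := by
    rw [Finset.mul_sum]
    apply sum_congr rfl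
    intro m _
    ring
  have hlast : ∑ m ∈ Icc 1 M, g m / m ≤ ∑ m ∈ Icc 1 ⌊x⌋₊, g m / m := by
    apply sum_le_sum_of_subset_of_nonneg
    · apply Icc_subset_Icc le_rfl hM
    · intro m _ _
      exact div_nonneg (hg0 m) (by positivity)
  have hΔ0 : 0 ≤ Δ := by
    have h1 := hΔ 1 le_rfl (by linarith)
    have hempty : (Finset.range (⌊(1:ℝ)⌋₊ + 1)).filter (fun q => IsPrimePow q) = ∅ := by
      ext q
      simp only [Finset.mem_filter, Finset.mem_range, Finset.notMem_empty, iff_false, not_and]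
      intro hq hpp
      have := hpp.one_lt
      have : ⌊(1:ℝ)⌋₊ = 1 := Nat.floor_one
      omega
    rw [hempty, Finset.sum_empty] at h1
    linarith
  show ∑ z ∈ σ, G (φ z) ≤ _
  calc ∑ z ∈ σ, G (φ z) ≤ ∑ y ∈ B, G y := hchain
    _ = _ := hB2
    _ ≤ ∑ m ∈ Icc 1 M, (Δ * ((M:ℝ) / m)) * g m := Finset.sum_le_sum hinner
    _ = Δ * M * ∑ m ∈ Icc 1 M, g m / m := hfinal
    _ ≤ Δ * M * ∑ m ∈ Icc 1 ⌊x⌋₊, g m / m := by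
        apply mul_le_mul_of_nonneg_left hlast
        positivity

theorem stmt0 (g : ℕ → ℝ) (hg0 : ∀ n, 0 ≤ g n) (hg1 : g 1 = 1)
    (hgm : ∀ m n : ℕ, Nat.Coprime m n → g (m * n) = g m * g n)
    (x : ℝ) (hx : 2 ≤ x) (Δ : ℝ)
    (hΔ : ∀ y : ℝ, 1 ≤ y → y ≤ x →
      ∑ q ∈ (Finset.range (⌊y⌋₊ + 1)).filter (fun q => IsPrimePow q),
        g q * Real.log q ≤ Δ * y) :
    ∑ n ∈ (Finset.range (⌊x⌋₊ + 1)).filter (fun n => 2 ≤ n), g n ≤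
      (x / Real.log x + 10 * x / (Real.log x) ^ 2) * Δ *
        ∑ n ∈ Finset.Icc 1 ⌊x⌋₊, g n / n := by
  have hx0 : (0:ℝ) < x := by linarith
  set N := ⌊x⌋₊ with hNdef
  set L := Real.log x with hLdef
  set S := ∑ n ∈ Finset.Icc 1 N, g n / n with hSdef
  have hN2 : 2 ≤ N := Nat.le_floor (by exact_mod_cast hx)
  have hNx : (N:ℝ) ≤ x := Nat.floor_le hx0.le
  have hL : 0 < L := Real.log_pos (by linarith)
  have hlog2 : 0 < Real.log 2 := Real.log_pos one_lt_two
  have hS0 : 0 ≤ S := by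
    apply Finset.sum_nonneg
    intro m _
    exact div_nonneg (hg0 m) (by positivity)
  have hΔ0 : 0 ≤ Δ := by
    have h1 := hΔ 1 le_rfl (by linarith)
    have hempty : (Finset.range (⌊(1:ℝ)⌋₊ + 1)).filter (fun q => IsPrimePow q) = ∅ := by
      ext q
      simp only [Finset.mem_filter, Finset.mem_range, Finset.notMem_empty, iff_false, not_and]
      intro hq hpp
      have := hpp.one_lt
      have : ⌊(1:ℝ)⌋₊ = 1 := Nat.floor_one
      omega
    rw [hempty, Finset.sum_empty] at h1
    linarith
  -- rewrite index set
  have hset : (Finset.range (N + 1)).filter (fun n => 2 ≤ n) = Icc 2 N := by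
    ext n
    simp only [Finset.mem_filter, Finset.mem_range, mem_Icc, Nat.lt_succ_iff]
    omega
  rw [hset]
  -- split
  have hsplit : ∀ n ∈ Icc 2 N, g n * L = g n * Real.log n + g n * Real.log (x / n) := by
    intro n hn
    rw [mem_Icc] at hn
    have hn0 : (0:ℝ) < n := by
      have : (2:ℝ) ≤ n := by exact_mod_cast hn.1
      linarith
    rw [Real.log_div (ne_of_gt hx0) (ne_of_gt hn0)]
    ring
  have hTL : (∑ n ∈ Icc 2 N, g n) * L =
      (∑ n ∈ Icc 2 N, g n * Real.log n) + ∑ n ∈ Icc 2 N, g n * Real.log (x / n) := by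
    rw [Finset.sum_mul, ← Finset.sum_add_distrib]
    exact Finset.sum_congr rfl hsplit
  -- first piece
  have hK : (∑ n ∈ Icc 2 N, g n * Real.log n) ≤ Δ * x * S := by
    calc (∑ n ∈ Icc 2 N, g n * Real.log n) ≤ Δ * N * S := aux_K g hg0 hgm x hx Δ hΔ N le_rfl
      _ ≤ Δ * x * S := by
          apply mul_le_mul_of_nonneg_right _ hS0
          exact mul_le_mul_of_nonneg_left hNx hΔ0
  -- second piece via Abel
  set w : ℕ → ℝ := fun n => Real.log (x / n) / Real.log n with hwdef
  have hU : ∑ n ∈ Icc 2 N, g n * Real.log (x / n) =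
      ∑ n ∈ Icc 2 N, (g n * Real.log n) * w n := by
    apply Finset.sum_congr rfl
    intro n hn
    rw [mem_Icc] at hn
    have hln : (0:ℝ) < Real.log n := by
      apply Real.log_pos
      exact_mod_cast Nat.lt_of_lt_of_le one_lt_two hn.1
    simp only [hwdef]
    field_simp
  have habel : ∑ n ∈ Icc 2 N, (g n * Real.log n) * w n ≤
      (Δ * S) * (2 * w 2 + ∑ n ∈ Icc 3 N, w n) := by
    apply aux_abel _ _ _ _ hN2
    · intro n
      exact mul_nonneg (hg0 n) (Real.log_natCast_nonneg n)
    · intro n h2n hnN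
      have hn0 : (0:ℝ) < n := by positivity
      apply div_nonneg
      · apply Real.log_nonneg
        rw [le_div_iff₀ (by exact_mod_cast Nat.lt_of_lt_of_le Nat.zero_lt_two h2n)]
        have h1 : (n:ℝ) ≤ N := by exact_mod_cast hnN
        linarith
      · apply Real.log_nonneg
        exact_mod_cast Nat.one_le_iff_ne_zero.mpr (by omega)
    · intro n h2n hnN
      have hnp : (0:ℝ) < n := by
        have : (2:ℝ) ≤ n := by exact_mod_cast h2n
        linarith
      have hnp1 : (0:ℝ) < (n:ℝ) + 1 := by linarith
      have hnum : Real.log (x / (n+1:ℕ)) ≤ Real.log (x / n) := by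
        apply Real.log_le_log (by positivity)
        apply div_le_div_of_nonneg_left hx0.le hnp
        push_cast; linarith
      have hnum0 : 0 ≤ Real.log (x / (n+1:ℕ)) := by
        apply Real.log_nonneg
        rw [le_div_iff₀ (by push_cast; linarith)]
        have h1 : ((n+1:ℕ):ℝ) ≤ N := by exact_mod_cast hnN
        linarith
      have hden : Real.log (n:ℝ) ≤ Real.log ((n+1:ℕ):ℝ) := by
        apply Real.log_le_log hnp
        push_cast; linarith
      have hdenp : (0:ℝ) < Real.log n := by
        apply Real.log_pos
        exact_mod_cast Nat.lt_of_lt_of_le one_lt_two h2n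
      have hc : 0 ≤ Real.log (x / (n:ℝ)) := by
        apply Real.log_nonneg
        rw [le_div_iff₀ hnp]
        have h1 : (n:ℝ) ≤ N := by
          have h2 : n ≤ N := by omega
          exact_mod_cast h2
        linarith
      simp only [hwdef]
      exact div_le_div₀ hc hnum hdenp hden
    · intro k h2k hkN
      calc ∑ n ∈ Icc 2 k, g n * Real.log n ≤ Δ * k * S := aux_K g hg0 hgm x hx Δ hΔ k hkN
        _ = (Δ * S) * k := by ring
  -- bound the weight sum
  set R := Real.sqrt x with hRdef
  have hR0 : 0 < R := Real.sqrt_pos.mpr hx0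
  have hRx : R ^ 2 = x := Real.sq_sqrt hx0.le
  have hlogR : Real.log R = L / 2 := Real.log_sqrt hx0.le
  have hw2 : w 2 ≤ L / Real.log 2 := by
    simp only [hwdef]
    apply div_le_div₀ hL.le _ hlog2 (by norm_num)
    apply Real.log_le_log (by positivity)
    calc x / ((2:ℕ):ℝ) ≤ x / 1 := by
          apply div_le_div_of_nonneg_left hx0.le one_pos (by norm_num)
      _ = x := by ring
  have hw2pos : 0 ≤ w 2 := by
    simp only [hwdef]
    apply div_nonneg _ (Real.log_natCast_nonneg 2)
    apply Real.log_nonneg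
    rw [le_div_iff₀ (by norm_num : (0:ℝ) < ((2:ℕ):ℝ))]
    push_cast
    linarith
  have hWsum : ∑ n ∈ Icc 3 N, w n ≤ ∑ n ∈ Icc 2 N, w n := by
    apply sum_le_sum_of_subset_of_nonneg
    · apply Icc_subset_Icc (by omega) le_rfl
    · intro n hn _
      rw [mem_Icc] at hn
      simp only [hwdef]
      apply div_nonneg
      · apply Real.log_nonneg
        rw [le_div_iff₀ (by exact_mod_cast Nat.lt_of_lt_of_le Nat.zero_lt_two hn.1)]
        have h1 : (n:ℝ) ≤ N := by exact_mod_cast hn.2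
        linarith
      · apply Real.log_nonneg
        exact_mod_cast Nat.one_le_iff_ne_zero.mpr (by omega)
  have hP : ∑ n ∈ Icc 2 N, w n ≤ (L / Real.log 2) * R + (2 / L) * x := by
    rw [← Finset.sum_filter_add_sum_filter_not (Icc 2 N) (fun n : ℕ => (n:ℝ) ≤ R)]
    apply add_le_add
    · -- small n
      have hbound : ∀ n ∈ (Icc 2 N).filter (fun n : ℕ => (n:ℝ) ≤ R), w n ≤ L / Real.log 2 := by
        intro n hn
        rw [Finset.mem_filter, mem_Icc] at hn
        simp only [hwdef]
        apply div_le_div₀ hL.le _ hlog2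
        · apply Real.log_le_log (by norm_num)
          exact_mod_cast hn.1.1
        · have hn0 : (0:ℝ) < n := by
            have h1 : (2:ℝ) ≤ n := by exact_mod_cast hn.1.1
            linarith
          apply Real.log_le_log (div_pos hx0 hn0)
          calc x / (n:ℝ) ≤ x / 1 := by
                apply div_le_div_of_nonneg_left hx0.le one_pos
                exact_mod_cast Nat.lt_of_lt_of_le Nat.zero_lt_one (by omega : 1 ≤ n)
            _ = x := by ring
      calc ∑ n ∈ (Icc 2 N).filter (fun n : ℕ => (n:ℝ) ≤ R), w n
          ≤ ∑ _n ∈ (Icc 2 N).filter (fun n : ℕ => (n:ℝ) ≤ R), (L / Real.log 2) :=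
            Finset.sum_le_sum hbound
        _ = ((Icc 2 N).filter (fun n : ℕ => (n:ℝ) ≤ R)).card * (L / Real.log 2) := by
            rw [Finset.sum_const, nsmul_eq_mul]
        _ ≤ R * (L / Real.log 2) := by
            apply mul_le_mul_of_nonneg_right _ (by positivity)
            have hsub : (Icc 2 N).filter (fun n : ℕ => (n:ℝ) ≤ R) ⊆ Icc 2 ⌊R⌋₊ := by
              intro n hn
              rw [Finset.mem_filter, mem_Icc] at hn
              rw [mem_Icc]
              exact ⟨hn.1.1, Nat.le_floor hn.2⟩
            calc (((Icc 2 N).filter (fun n : ℕ => (n:ℝ) ≤ R)).card : ℝ)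
                ≤ ((Icc 2 ⌊R⌋₊).card : ℝ) := by exact_mod_cast Finset.card_le_card hsub
              _ ≤ (⌊R⌋₊ : ℝ) := by
                  rw [Nat.card_Icc]
                  push_cast [Nat.cast_sub]
                  have : (⌊R⌋₊ + 1 - 2 : ℕ) ≤ ⌊R⌋₊ := by omega
                  exact_mod_cast this
              _ ≤ R := Nat.floor_le hR0.le
        _ = (L / Real.log 2) * R := by ring
    · -- large n
      have hbound : ∀ n ∈ (Icc 2 N).filter (fun n : ℕ => ¬ (n:ℝ) ≤ R), w n ≤ (2 / L) * Real.log (x / n) := by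
        intro n hn
        rw [Finset.mem_filter, mem_Icc] at hn
        push_neg at hn
        have hRn : R ≤ (n:ℝ) := le_of_lt hn.2
        have hln : L / 2 ≤ Real.log n := by
          rw [← hlogR]
          exact Real.log_le_log hR0 hRn
        have hnum0 : 0 ≤ Real.log (x / n) := by
          apply Real.log_nonneg
          rw [le_div_iff₀ (by exact_mod_cast Nat.lt_of_lt_of_le Nat.zero_lt_two hn.1.1)]
          have h1 : (n:ℝ) ≤ N := by exact_mod_cast hn.1.2
          linarith
        simp only [hwdef]
        rw [div_le_iff₀ (by linarith : (0:ℝ) < Real.log n)]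
        calc Real.log (x / n) = (2 / L) * Real.log (x / n) * (L / 2) := by
              field_simp
          _ ≤ (2 / L) * Real.log (x / n) * Real.log n := by
              apply mul_le_mul_of_nonneg_left hln (by positivity)
      calc ∑ n ∈ (Icc 2 N).filter (fun n : ℕ => ¬ (n:ℝ) ≤ R), w n
          ≤ ∑ n ∈ (Icc 2 N).filter (fun n : ℕ => ¬ (n:ℝ) ≤ R), (2 / L) * Real.log (x / n) :=
            Finset.sum_le_sum hbound
        _ ≤ ∑ n ∈ Icc 2 N, (2 / L) * Real.log (x / n) := by
            apply sum_le_sum_of_subset_of_nonneg (Finset.filter_subset _ _)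
            intro n hn _
            rw [mem_Icc] at hn
            apply mul_nonneg (by positivity)
            apply Real.log_nonneg
            rw [le_div_iff₀ (by exact_mod_cast Nat.lt_of_lt_of_le Nat.zero_lt_two hn.1)]
            have h1 : (n:ℝ) ≤ N := by exact_mod_cast hn.2
            linarith
        _ = (2 / L) * ∑ n ∈ Icc 2 N, Real.log (x / n) := by rw [Finset.mul_sum]
        _ ≤ (2 / L) * x := by
            apply mul_le_mul_of_nonneg_left _ (by positivity)
            exact aux_sum_log_le (by omega) hNx
  -- numeric inequality
  have hnum : 2 * (L / Real.log 2) + ((L / Real.log 2) * R + (2 / L) * x) ≤ 10 * x / L := by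
    set E := Real.exp 1 with hEdef
    have hep : (0:ℝ) < E := Real.exp_pos 1
    have he : (2.7182818283 : ℝ) < E := Real.exp_one_gt_d9
    have hl2 : (0.6931471803 : ℝ) < Real.log 2 := Real.log_two_gt_d9
    have hexpL : Real.exp L = x := Real.exp_log hx0
    have hee : Real.exp (L/2) * Real.exp (L/2) = x := by
      rw [← Real.exp_add, show L/2 + L/2 = L by ring, hexpL]
    have hee2 : Real.exp (L/4) * Real.exp (L/4) = Real.exp (L/2) := by
      rw [← Real.exp_add]; congr 1; ring
    have hRe : R = Real.exp (L/2) := by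
      have h : (Real.exp (L/2))^2 = x := by rw [sq, hee]
      rw [hRdef, ← h, Real.sqrt_sq (Real.exp_nonneg _)]
    have hL1 : L * E ≤ 2 * Real.exp (L / 2) := by
      have h := Real.add_one_le_exp (L / 2 - 1)
      have h2 : Real.exp (L / 2 - 1) * E = Real.exp (L / 2) := by
        rw [hEdef, ← Real.exp_add]; congr 1; ring
      have h3 := mul_le_mul_of_nonneg_right h hep.le
      rw [h2] at h3
      linarith
    have hL2 : L * E ≤ 4 * Real.exp (L / 4) := by
      have h := Real.add_one_le_exp (L / 4 - 1)
      have h2 : Real.exp (L / 4 - 1) * E = Real.exp (L / 4) := by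
        rw [hEdef, ← Real.exp_add]; congr 1; ring
      have h3 := mul_le_mul_of_nonneg_right h hep.le
      rw [h2] at h3
      linarith
    have hsq1 : L^2 * E^2 ≤ 4 * x := by
      have h := mul_le_mul hL1 hL1 (by positivity) (by positivity)
      calc L^2 * E^2 = (L*E) * (L*E) := by ring
        _ ≤ (2 * Real.exp (L/2)) * (2 * Real.exp (L/2)) := h
        _ = 4 * (Real.exp (L/2) * Real.exp (L/2)) := by ring
        _ = 4 * x := by rw [hee]
    have hsq2 : L^2 * E^2 ≤ 16 * R := by
      have h := mul_le_mul hL2 hL2 (by positivity) (by positivity)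
      calc L^2 * E^2 = (L*E) * (L*E) := by ring
        _ ≤ (4 * Real.exp (L/4)) * (4 * Real.exp (L/4)) := h
        _ = 16 * (Real.exp (L/4) * Real.exp (L/4)) := by ring
        _ = 16 * Real.exp (L/2) := by rw [hee2]
        _ = 16 * R := by rw [hRe]
    have hA0 : 0 ≤ 2*L^2 + L^2*R := by positivity
    have h1 : (2*L^2 + L^2*R) * E^2 ≤ 24 * x := by
      have ha : L^2*E^2*R ≤ 16*R*R := by
        calc L^2*E^2*R = (L^2*E^2)*R := by ring
          _ ≤ (16*R)*R := mul_le_mul_of_nonneg_right hsq2 hR0.le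
          _ = 16*R*R := by ring
      have hb : 2*(L^2*E^2) ≤ 2*(4*x) := by linarith only [hsq1]
      calc (2*L^2 + L^2*R) * E^2 = 2*(L^2*E^2) + L^2*E^2*R := by ring
        _ ≤ 2*(4*x) + 16*R*R := add_le_add hb ha
        _ = 8*x + 16*R^2 := by ring
        _ = 24*x := by rw [hRx]; ring
    have hE2 : (7.389:ℝ) ≤ E^2 := by
      have hmul := mul_le_mul he.le he.le (by norm_num) (by linarith only [he])
      calc (7.389:ℝ) ≤ 2.7182818283 * 2.7182818283 := by norm_num
        _ ≤ E * E := hmul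
        _ = E^2 := (sq E).symm
    have h2 : (2*L^2 + L^2*R) * 7.389 ≤ 24 * x :=
      le_trans (mul_le_mul_of_nonneg_left hE2 hA0) h1
    have hxlog : 8*x*0.6931471803 ≤ 8*x*Real.log 2 := by
      have h8x : (0:ℝ) ≤ 8*x := by linarith
      calc 8*x*0.6931471803 = (8*x)*0.6931471803 := by ring
        _ ≤ (8*x)*Real.log 2 := mul_le_mul_of_nonneg_left hl2.le h8x
        _ = 8*x*Real.log 2 := by ring
    have key : 2*L^2 + L^2*R ≤ 8 * x * Real.log 2 := by linarith only [h2, hxlog, hA0, hx0]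
    rw [show (10:ℝ) * x / L = (10 * x) / L by ring, le_div_iff₀ hL]
    have hexp : (2 * (L / Real.log 2) + ((L / Real.log 2) * R + (2 / L) * x)) * L
        = (2*L^2 + L^2*R) / Real.log 2 + 2*x := by
      field_simp
      ring
    rw [hexp]
    have h8 : (2*L^2 + L^2*R) / Real.log 2 ≤ 8 * x := by
      rw [div_le_iff₀ hlog2]
      linarith
    linarith
  -- conclusion
  have hW : 2 * w 2 + ∑ n ∈ Icc 3 N, w n ≤ 10 * x / L := by linarith
  have hU2 : ∑ n ∈ Icc 2 N, g n * Real.log (x / n) ≤ (Δ * S) * (10 * x / L) := by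
    rw [hU]
    exact le_trans habel (mul_le_mul_of_nonneg_left hW (mul_nonneg hΔ0 hS0))
  have hT : (∑ n ∈ Icc 2 N, g n) * L ≤ Δ * x * S + Δ * S * (10 * x / L) := by
    rw [hTL]
    exact add_le_add hK hU2
  have hfin : (∑ n ∈ Icc 2 N, g n) * L ≤ ((x / L + 10 * x / L ^ 2) * Δ * S) * L := by
    have heq : ((x / L + 10 * x / L ^ 2) * Δ * S) * L = Δ * x * S + Δ * S * (10 * x / L) := by
      field_simp
    rw [heq]
    exact hT
  exact le_of_mul_le_mul_right hfin hL
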